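/- arXiv:1504.00470 — 2 statements merged into one kernel-verified Lean document; each statement's English description precedes it below -/
import Mathlib

section
/- For d ≥ 3 odd, the quantities (1/24)(d-3)(d-5)(1/d)Δ_d and (1/8)(d-1)(d-3)(1/d)Δ_d are integers, where Δ_d = d³∏_{p|d}(1-p⁻²). -/
/-- `Δ_d = d³ ∏_{p ∣ d} (1 - p⁻²)`. -/
noncomputable def DeltaFormula (d : ℕ) : ℚ :=
  (d : ℚ) ^ 3 * ∏ p ∈ d.primeFactors, (1 - ((p : ℚ))⁻¹ ^ 2)

/-- Integer value of `Δ_d / d`. -/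
def Kval (d : ℕ) : ℕ :=
  (d / ∏ p ∈ d.primeFactors, p) ^ 2 * ∏ p ∈ d.primeFactors, (p ^ 2 - 1)

lemma deltaFormula_div (d : ℕ) (hd : d ≠ 0) :
    (1 / (d : ℚ)) * DeltaFormula d = (Kval d : ℚ) := by
  classical
  set r : ℕ := ∏ p ∈ d.primeFactors, p with hr
  have hrd : r ∣ d := Nat.prod_primeFactors_dvd d
  obtain ⟨q, hq⟩ := hrd
  have hr0 : r ≠ 0 := by
    rintro h; rw [h] at hq; simp at hq; exact hd hq
  have hdq : d / r = q := by rw [hq]; exact Nat.mul_div_cancel_left q (Nat.pos_of_ne_zero hr0)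
  have hterm : ∀ p ∈ d.primeFactors, (1 - ((p : ℚ))⁻¹ ^ 2) = ((p : ℚ) ^ 2 - 1) / (p : ℚ) ^ 2 := by
    intro p hp
    have hp0 : (p : ℚ) ≠ 0 := by
      exact_mod_cast (Nat.prime_of_mem_primeFactors hp).ne_zero
    field_simp
  have hprod : ∏ p ∈ d.primeFactors, (1 - ((p : ℚ))⁻¹ ^ 2)
      = (∏ p ∈ d.primeFactors, ((p : ℚ) ^ 2 - 1)) / (r : ℚ) ^ 2 := by
    rw [Finset.prod_congr rfl hterm, Finset.prod_div_distrib]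
    congr 1
    rw [hr]
    push_cast
    rw [← Finset.prod_pow]
  have hcast : ((∏ p ∈ d.primeFactors, (p ^ 2 - 1) : ℕ) : ℚ)
      = ∏ p ∈ d.primeFactors, ((p : ℚ) ^ 2 - 1) := by
    rw [Nat.cast_prod]
    refine Finset.prod_congr rfl ?_
    intro p hp
    have h1 : 1 ≤ p ^ 2 :=
      Nat.one_le_pow _ _ (Nat.prime_of_mem_primeFactors hp).pos
    push_cast [Nat.cast_sub h1]
    ring
  have hd0 : (d : ℚ) ≠ 0 := by exact_mod_cast hd
  have hr0' : (r : ℚ) ≠ 0 := by exact_mod_cast hr0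
  unfold DeltaFormula Kval
  rw [hprod, ← hr, hdq, Nat.cast_mul, Nat.cast_pow, hcast]
  have hdq' : (d : ℚ) = (r : ℚ) * (q : ℚ) := by exact_mod_cast hq
  field_simp
  rw [hdq']
  ring

lemma eight_div (k : ℤ) : (8 : ℤ) ∣ (2 * k) * (2 * k - 2) := by
  obtain ⟨m, hm⟩ := Int.even_mul_succ_self (k - 1)
  exact ⟨m, by linarith [hm]⟩

lemma three_div_K (d : ℕ) (hd3 : 3 ≤ d) (h : ¬ (3 ∣ d)) : (3 : ℕ) ∣ Kval d := by
  have hd1 : 1 < d := by omega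
  obtain ⟨p, hp⟩ := (Nat.nonempty_primeFactors.2 hd1).exists_mem
  have hpp := Nat.prime_of_mem_primeFactors hp
  have hpd := Nat.dvd_of_mem_primeFactors hp
  have hp3 : ¬ (3 ∣ p) := by
    intro h3
    have : p = 3 := ((Nat.prime_dvd_prime_iff_eq Nat.prime_three hpp).1 h3).symm
    exact h (this ▸ hpd)
  have hmod : p ^ 2 % 3 = (p % 3) ^ 2 % 3 := Nat.pow_mod p 2 3
  have hp2 : 2 ≤ p := hpp.two_le
  have h31 : (3 : ℕ) ∣ p ^ 2 - 1 := by
    have h1 : 1 ≤ p ^ 2 := Nat.one_le_pow _ _ hpp.pos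
    have : p % 3 = 1 ∨ p % 3 = 2 := by omega
    rcases this with h' | h' <;> (rw [h'] at hmod; omega)
  exact Dvd.dvd.mul_left (h31.trans (Finset.dvd_prod_of_mem (fun p => p ^ 2 - 1) hp)) _

/-- For `d ≥ 3` odd, the counts `(1/24)(d-3)(d-5)(1/d)Δ_d` and `(1/8)(d-1)(d-3)(1/d)Δ_d`
of reduced genus two square-tiled surfaces with torsion order `M = 1` and spin `3`
resp. `1` are integers. -/
theorem integrality_torsion_one_counts (d : ℕ) (hd : Odd d) (hd3 : 3 ≤ d) :
    (∃ n : ℤ, (1 / 24 : ℚ) * ((d : ℚ) - 3) * ((d : ℚ) - 5) * (1 / (d : ℚ))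
        * DeltaFormula d = (n : ℚ)) ∧
    (∃ n : ℤ, (1 / 8 : ℚ) * ((d : ℚ) - 1) * ((d : ℚ) - 3) * (1 / (d : ℚ))
        * DeltaFormula d = (n : ℚ)) := by
  have hd0 : d ≠ 0 := by omega
  have hK := deltaFormula_div d hd0
  obtain ⟨k, hk⟩ := hd
  have hk1 : 1 ≤ k := by omega
  have hDk : (d : ℤ) = 2 * k + 1 := by omega
  constructor
  · -- spin 3 count
    set N : ℤ := ((d:ℤ) - 3) * ((d:ℤ) - 5) * (Kval d) with hN
    have h8 : (8 : ℤ) ∣ ((d:ℤ) - 3) * ((d:ℤ) - 5) := by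
      have := eight_div ((k : ℤ) - 1)
      have heq : ((d:ℤ) - 3) * ((d:ℤ) - 5) = (2 * ((k : ℤ) - 1)) * (2 * ((k : ℤ) - 1) - 2) := by
        rw [hDk]; ring
      rw [heq]; exact this
    have h8N : (8 : ℤ) ∣ N := h8.mul_right _
    have h3N : (3 : ℤ) ∣ N := by
      rcases (by omega : d % 3 = 0 ∨ d % 3 = 1 ∨ d % 3 = 2) with h | h | h
      · have : (3 : ℤ) ∣ (d:ℤ) - 3 := by omega
        exact (this.mul_right _).mul_right _
      · have h3 : ¬ (3 ∣ d) := by omega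
        have := three_div_K d hd3 h3
        have : (3 : ℤ) ∣ (Kval d : ℤ) := by exact_mod_cast this
        exact this.mul_left _
      · have : (3 : ℤ) ∣ (d:ℤ) - 5 := by omega
        exact ((this.mul_left _).mul_right _)
    have h24 : (24 : ℤ) ∣ N := by
      obtain ⟨a, ha⟩ := h8N; obtain ⟨b, hb⟩ := h3N; omega
    obtain ⟨n, hn⟩ := h24
    refine ⟨n, ?_⟩
    have key : ((d : ℚ) - 3) * ((d : ℚ) - 5) * ((1 / (d : ℚ)) * DeltaFormula d) = (N : ℚ) := by
      rw [hK, hN]; push_cast; ring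
    have hn' : (N : ℚ) = 24 * (n : ℚ) := by exact_mod_cast hn
    linear_combination (1 / 24 : ℚ) * key + (1 / 24 : ℚ) * hn'
  · -- spin 1 count
    set N : ℤ := ((d:ℤ) - 1) * ((d:ℤ) - 3) * (Kval d) with hN
    have h8 : (8 : ℤ) ∣ ((d:ℤ) - 1) * ((d:ℤ) - 3) := by
      have := eight_div (k : ℤ)
      have heq : ((d:ℤ) - 1) * ((d:ℤ) - 3) = (2 * (k : ℤ)) * (2 * (k : ℤ) - 2) := by
        rw [hDk]; ring
      rw [heq]; exact this
    have h8N : (8 : ℤ) ∣ N := h8.mul_right _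
    obtain ⟨n, hn⟩ := h8N
    refine ⟨n, ?_⟩
    have key : ((d : ℚ) - 1) * ((d : ℚ) - 3) * ((1 / (d : ℚ)) * DeltaFormula d) = (N : ℚ) := by
      rw [hK, hN]; push_cast; ring
    have hn' : (N : ℚ) = 8 * (n : ℚ) := by exact_mod_cast hn
    linear_combination (1 / 8 : ℚ) * key + (1 / 8 : ℚ) * hn'
end

section
/- Let X = E₁ ∪ E₂ be a reducible genus two curve (two elliptic curves joined at a node S) and p: X → E an origami map of degree d = d₁ + d₂ with d_i = deg(p|_{E_i}). If d is odd, then the number of integral Weierstrass points ε(X,ω) lies in {1, 3}; more precisely exactly one of d₁, d₂ is odd, the odd-degree component carries no integral Weierstrass points, and the even-degree component carries 1 or 3 of them. -/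
private def tors2 (A : Type*) [AddCommGroup A] : AddSubgroup A where
  carrier := {x | 2 • x = 0}
  zero_mem' := by simp
  add_mem' := by
    intro a b ha hb
    simp only [Set.mem_setOf_eq] at *
    rw [smul_add, ha, hb, add_zero]
  neg_mem' := by
    intro a ha
    simp only [Set.mem_setOf_eq] at *
    rw [smul_neg, ha, neg_zero]

private lemma spin_key {A B : Type*} [AddCommGroup A] [AddCommGroup B] (q : A →+ B)
    (ht : Nat.card {x : A // 2 • x = 0} = 4) (d : ℕ) (hk : Nat.card q.ker = d)
    (hd : 0 < d) :
    (Odd d → Nat.card {x : A // 2 • x = 0 ∧ x ≠ 0 ∧ q x = 0} = 0) ∧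
    (Even d → Nat.card {x : A // 2 • x = 0 ∧ x ≠ 0 ∧ q x = 0} ∈ ({1, 3} : Set ℕ)) := by
  classical
  set K : AddSubgroup A := tors2 A ⊓ q.ker with hK
  have hT4 : Nat.card (tors2 A) = 4 := ht
  have hdvd4 : Nat.card K ∣ 4 := hT4 ▸ AddSubgroup.card_dvd_of_le inf_le_left
  have hdvdd : Nat.card K ∣ d := hk ▸ AddSubgroup.card_dvd_of_le inf_le_right
  have hKfin : Finite K := Nat.finite_of_card_ne_zero (by
    intro h0
    rw [h0] at hdvd4
    exact absurd (Nat.eq_zero_of_zero_dvd hdvd4) (by norm_num))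
  have hmem : ∀ x : A, x ∈ K ↔ 2 • x = 0 ∧ q x = 0 := by
    intro x
    rw [hK, AddSubgroup.mem_inf, AddMonoidHom.mem_ker]
    rfl
  have e : {x : A // 2 • x = 0 ∧ x ≠ 0 ∧ q x = 0} ≃ {y : K // y ≠ 0} :=
    { toFun := fun x => ⟨⟨x.1, (hmem x.1).2 ⟨x.2.1, x.2.2.2⟩⟩, by
        intro h
        exact x.2.2.1 (congrArg Subtype.val h)⟩
      invFun := fun y => ⟨y.1.1, ((hmem y.1.1).1 y.1.2).1, fun h => y.2 (Subtype.ext h),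
        ((hmem y.1.1).1 y.1.2).2⟩
      left_inv := fun x => rfl
      right_inv := fun y => rfl }
  have hcount : Nat.card {x : A // 2 • x = 0 ∧ x ≠ 0 ∧ q x = 0} = Nat.card K - 1 := by
    rw [Nat.card_congr e]
    have : Fintype K := Fintype.ofFinite _
    rw [Nat.card_eq_fintype_card, Nat.card_eq_fintype_card]
    have h1 : Fintype.card {y : ↥K // y = 0} = 1 := Fintype.card_subtype_eq 0
    calc Fintype.card {y : ↥K // y ≠ 0}
        = Fintype.card ↥K - Fintype.card {y : ↥K // y = 0} := Fintype.card_subtype_compl _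
      _ = Fintype.card ↥K - 1 := by rw [h1]
  constructor
  · intro hodd
    have hcop : Nat.Coprime 4 d := by
      have h2 : Nat.Coprime 2 d := (Nat.prime_two.coprime_iff_not_dvd).2 (by
        have := Nat.odd_iff.1 hodd; omega)
      have h4 := h2.pow_left 2
      norm_num at h4
      exact h4
    have h1 : Nat.card K = 1 := Nat.dvd_one.1 (hcop ▸ Nat.dvd_gcd hdvd4 hdvdd)
    rw [hcount, h1]
  · intro heven
    have hkerfin : Finite q.ker := Nat.finite_of_card_ne_zero (by omega)
    have : Fintype q.ker := Fintype.ofFinite _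
    have h2d : (2 : ℕ) ∣ Fintype.card q.ker := by
      rw [← Nat.card_eq_fintype_card, hk]
      exact heven.two_dvd
    obtain ⟨x, hx⟩ := exists_prime_addOrderOf_dvd_card 2 h2d
    have hx2 : 2 • (x : A) = 0 := by
      have := addOrderOf_nsmul_eq_zero x
      rw [hx] at this
      exact_mod_cast congrArg (Subtype.val) this
    have hxne : (x : A) ≠ 0 := by
      intro h0
      have : x = 0 := Subtype.ext h0
      rw [this] at hx
      simp at hx
    have hxK : (x : A) ∈ K := (hmem _).2 ⟨hx2, x.2⟩
    have hnt : Nontrivial K := ⟨⟨⟨x, hxK⟩, 0, fun h => hxne (congrArg Subtype.val h)⟩⟩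
    have h1lt : 1 < Nat.card K := Finite.one_lt_card_iff_nontrivial.2 hnt
    have h24 : Nat.card K = 2 ∨ Nat.card K = 4 := by
      have hle : Nat.card ↥K ≤ 4 := Nat.le_of_dvd (by norm_num) hdvd4
      interval_cases h : Nat.card ↥K <;> omega
    rcases h24 with h | h <;> rw [hcount, h] <;> simp


/-- Abstract form of the spin computation for a reducible genus two surface
`X = E₁ ∪ E₂` with an origami map `p : X → E` of odd degree `d = d₁ + d₂`:
modelling the components and target as abelian groups with Klein-four 2-torsion and
`p|_{E_i}` as surjective homomorphisms `qᵢ` with kernel of order `dᵢ`, if `d₁ + d₂`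
is odd then exactly one `dᵢ` is odd, the odd-degree component carries no integral
Weierstrass points (nonzero 2-torsion points mapping to `0`), the even-degree
component carries `1` or `3` of them, and the total number `ε(X,ω)` lies in `{1,3}`. -/
theorem reducible_spin_odd_degree {E₁ E₂ E : Type*}
    [AddCommGroup E₁] [AddCommGroup E₂] [AddCommGroup E]
    (q₁ : E₁ →+ E) (q₂ : E₂ →+ E)
    (hs₁ : Function.Surjective q₁) (hs₂ : Function.Surjective q₂)
    (ht₁ : Nat.card {x : E₁ // 2 • x = 0} = 4)
    (ht₂ : Nat.card {x : E₂ // 2 • x = 0} = 4)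
    (htE : Nat.card {y : E // 2 • y = 0} = 4)
    (d₁ d₂ : ℕ) (hk₁ : Nat.card q₁.ker = d₁) (hk₂ : Nat.card q₂.ker = d₂)
    (hd₁ : 0 < d₁) (hd₂ : 0 < d₂) (hodd : Odd (d₁ + d₂)) :
    ((Odd d₁ ∧ Even d₂) ∨ (Even d₁ ∧ Odd d₂)) ∧
    (Odd d₁ → Nat.card {x : E₁ // 2 • x = 0 ∧ x ≠ 0 ∧ q₁ x = 0} = 0) ∧
    (Odd d₂ → Nat.card {x : E₂ // 2 • x = 0 ∧ x ≠ 0 ∧ q₂ x = 0} = 0) ∧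
    (Even d₁ → Nat.card {x : E₁ // 2 • x = 0 ∧ x ≠ 0 ∧ q₁ x = 0} ∈ ({1, 3} : Set ℕ)) ∧
    (Even d₂ → Nat.card {x : E₂ // 2 • x = 0 ∧ x ≠ 0 ∧ q₂ x = 0} ∈ ({1, 3} : Set ℕ)) ∧
    (Nat.card {x : E₁ // 2 • x = 0 ∧ x ≠ 0 ∧ q₁ x = 0}
      + Nat.card {x : E₂ // 2 • x = 0 ∧ x ≠ 0 ∧ q₂ x = 0} ∈ ({1, 3} : Set ℕ)) := by
  obtain ⟨ho₁, he₁⟩ := spin_key q₁ ht₁ d₁ hk₁ hd₁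
  obtain ⟨ho₂, he₂⟩ := spin_key q₂ ht₂ d₂ hk₂ hd₂
  have hpar : (Odd d₁ ∧ Even d₂) ∨ (Even d₁ ∧ Odd d₂) := by
    rcases Nat.even_or_odd d₁ with h | h
    · exact Or.inr ⟨h, by
        rcases Nat.even_or_odd d₂ with h2 | h2
        · exact absurd (h.add h2) (Nat.not_even_iff_odd.2 hodd)
        · exact h2⟩
    · exact Or.inl ⟨h, by
        rcases Nat.even_or_odd d₂ with h2 | h2
        · exact h2
        · exact absurd (h.add_odd h2) (Nat.not_even_iff_odd.2 hodd)⟩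
  refine ⟨hpar, ho₁, ho₂, he₁, he₂, ?_⟩
  rcases hpar with ⟨h1, h2⟩ | ⟨h1, h2⟩
  · rw [ho₁ h1, zero_add]; exact he₂ h2
  · rw [ho₂ h2, add_zero]; exact he₁ h1
end
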